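/- Let Z₁,…,Z_m be negative cylinder dependent (NCD) Bernoulli random variables and let Z⁰₁,…,Z⁰_m be mutually independent Bernoulli random variables with P(Z⁰_i = 1) = P(Z_i = 1) for each i. Then for all nonnegative weights w₁,…,w_m and every λ ∈ ℝ, the moment generating functions satisfy E[exp(λ Σ_{i=1}^m w_i Z_i)] ≤ E[exp(λ Σ_{i=1}^m w_i Z⁰_i)] = Π_{i=1}^m E[exp(λ w_i Z⁰_i)]. -/

import Mathlib

open MeasureTheory ProbabilityTheory Finset

/-- A family of Bernoulli ({0,1}-valued) random variables is *negative cylinder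
dependent* (NCD) if for every finite subset `S` of indices,
`P(∩_{i∈S} {Z_i = 1}) ≤ Π_{i∈S} P(Z_i = 1)` and
`P(∩_{i∈S} {Z_i = 0}) ≤ Π_{i∈S} P(Z_i = 0)`. -/
def NCD {Ω ι : Type*} [MeasurableSpace Ω] (μ : Measure Ω) (Z : ι → Ω → ℝ) : Prop :=
  ∀ S : Finset ι,
    μ (⋂ i ∈ S, {ω | Z i ω = 1}) ≤ ∏ i ∈ S, μ {ω | Z i ω = 1} ∧
    μ (⋂ i ∈ S, {ω | Z i ω = 0}) ≤ ∏ i ∈ S, μ {ω | Z i ω = 0}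

lemma aux_prod_le
    {Ω : Type*} [MeasurableSpace Ω] (μ : Measure Ω) [IsProbabilityMeasure μ]
    {m : ℕ} (T : Fin m → Ω → ℝ) (hmeas : ∀ i, Measurable (T i))
    (h01 : ∀ i ω, T i ω = 0 ∨ T i ω = 1)
    (hb : ∀ S : Finset (Fin m),
      μ (⋂ i ∈ S, {ω | T i ω = 1}) ≤ ∏ i ∈ S, μ {ω | T i ω = 1})
    (c : Fin m → ℝ) (hc : ∀ i, 0 ≤ c i) :
    ∫ ω, ∏ i, (c i * T i ω + 1) ∂μ ≤ ∏ i, (c i * (μ {ω | T i ω = 1}).toReal + 1) := by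
  classical
  set A : Fin m → Set Ω := fun i => {ω | T i ω = 1} with hA
  have hAmeas : ∀ i, MeasurableSet (A i) := fun i => (hmeas i) (measurableSet_singleton 1)
  have hImeas : ∀ t : Finset (Fin m), MeasurableSet (⋂ i ∈ t, A i) :=
    fun t => MeasurableSet.biInter t.countable_toSet (fun i _ => hAmeas i)
  have hexp : ∀ ω, ∏ i, (c i * T i ω + 1)
      = ∑ t ∈ (univ : Finset (Fin m)).powerset,
          (∏ i ∈ t, c i) * (⋂ i ∈ t, A i).indicator (fun _ => (1:ℝ)) ω := by
    intro ω
    rw [Finset.prod_add]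
    refine Finset.sum_congr rfl fun t _ => ?_
    rw [Finset.prod_const_one, mul_one]
    by_cases h : ω ∈ ⋂ i ∈ t, A i
    · rw [Set.indicator_of_mem h, mul_one]
      simp only [Set.mem_iInter, hA, Set.mem_setOf_eq] at h
      exact Finset.prod_congr rfl (fun i hi => by rw [h i hi, mul_one])
    · rw [Set.indicator_of_notMem h, mul_zero]
      simp only [Set.mem_iInter, not_forall, hA, Set.mem_setOf_eq] at h
      obtain ⟨i, hi, hi1⟩ := h
      refine Finset.prod_eq_zero hi ?_
      rcases h01 i ω with h0 | h1
      · rw [h0, mul_zero]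
      · exact absurd h1 hi1
  have hint : ∀ t : Finset (Fin m),
      Integrable (fun ω => (∏ i ∈ t, c i) * (⋂ i ∈ t, A i).indicator (fun _ => (1:ℝ)) ω) μ :=
    fun t => ((integrable_const (1:ℝ)).indicator (hImeas t)).const_mul _
  have step1 : ∫ ω, ∏ i, (c i * T i ω + 1) ∂μ
      = ∑ t ∈ (univ : Finset (Fin m)).powerset,
          (∏ i ∈ t, c i) * (μ (⋂ i ∈ t, A i)).toReal := by
    rw [integral_congr_ae (Filter.Eventually.of_forall hexp),
      integral_finset_sum _ (fun t _ => hint t)]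
    refine Finset.sum_congr rfl fun t _ => ?_
    rw [integral_const_mul _ _, integral_indicator_const (1:ℝ) (hImeas t), smul_eq_mul, mul_one, measureReal_def]
  rw [step1]
  have step2 : ∏ i, (c i * (μ (A i)).toReal + 1)
      = ∑ t ∈ (univ : Finset (Fin m)).powerset,
          (∏ i ∈ t, c i) * ∏ i ∈ t, (μ (A i)).toReal := by
    rw [Finset.prod_add]
    refine Finset.sum_congr rfl fun t _ => ?_
    rw [Finset.prod_const_one, mul_one, Finset.prod_mul_distrib]
  rw [step2]
  refine Finset.sum_le_sum fun t _ => ?_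
  refine mul_le_mul_of_nonneg_left ?_ (Finset.prod_nonneg fun i _ => hc i)
  have hfin : (∏ i ∈ t, μ (A i)) ≠ ⊤ := by
    refine ne_top_of_le_ne_top (by simp) (Finset.prod_le_one (fun i _ => bot_le) ?_)
    exact fun i _ => prob_le_one
  calc (μ (⋂ i ∈ t, A i)).toReal ≤ (∏ i ∈ t, μ (A i)).toReal :=
        ENNReal.toReal_mono hfin (hb t)
    _ = ∏ i ∈ t, (μ (A i)).toReal := ENNReal.toReal_prod _ _


/-- Let `Z₁,…,Z_m` be NCD Bernoulli random variables and let
`Z⁰₁,…,Z⁰_m` be mutually independent Bernoulli random variables (on a possibly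
different probability space) with `P(Z⁰_i = 1) = P(Z_i = 1)` for each `i`.  Then for
all nonnegative weights `w₁,…,w_m` and every `λ ∈ ℝ`,
`E[exp(λ Σ_i w_i Z_i)] ≤ E[exp(λ Σ_i w_i Z⁰_i)] = Π_i E[exp(λ w_i Z⁰_i)]`. -/
theorem ncd_mgf_le_independent_twin
    {Ω : Type*} [MeasurableSpace Ω] (μ : Measure Ω) [IsProbabilityMeasure μ]
    {Ω₂ : Type*} [MeasurableSpace Ω₂] (μ₂ : Measure Ω₂) [IsProbabilityMeasure μ₂]
    (m : ℕ) (hm : 2 ≤ m)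
    (Z : Fin m → Ω → ℝ)
    (hZmeas : ∀ i, Measurable (Z i))
    (hZ01 : ∀ (i : Fin m) (ω : Ω), Z i ω = 0 ∨ Z i ω = 1)
    (hNCD : NCD μ Z)
    (Z₀ : Fin m → Ω₂ → ℝ)
    (hZ₀meas : ∀ i, Measurable (Z₀ i))
    (hZ₀01 : ∀ (i : Fin m) (ω : Ω₂), Z₀ i ω = 0 ∨ Z₀ i ω = 1)
    (hZ₀indep : iIndepFun Z₀ μ₂)
    (hsame : ∀ i, μ₂ {ω | Z₀ i ω = 1} = μ {ω | Z i ω = 1})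
    (w : Fin m → ℝ) (hw : ∀ i, 0 ≤ w i) (lam : ℝ) :
    (∫ ω, Real.exp (lam * ∑ i, w i * Z i ω) ∂μ
        ≤ ∫ ω, Real.exp (lam * ∑ i, w i * Z₀ i ω) ∂μ₂) ∧
    (∫ ω, Real.exp (lam * ∑ i, w i * Z₀ i ω) ∂μ₂
        = ∏ i, ∫ ω, Real.exp (lam * (w i * Z₀ i ω)) ∂μ₂) := by
  classical
  -- Part 2: independence factorisation via mgf_sum
  have key2 : ∫ ω, Real.exp (lam * ∑ i, w i * Z₀ i ω) ∂μ₂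
      = ∏ i, ∫ ω, Real.exp (lam * (w i * Z₀ i ω)) ∂μ₂ := by
    have hX : iIndepFun
        (fun i => fun ω => w i * Z₀ i ω) μ₂ :=
      hZ₀indep.comp (fun i x => w i * x) (fun i => measurable_const_mul _)
    have h := hX.mgf_sum (t := lam) (fun i => (hZ₀meas i).const_mul (w i)) Finset.univ
    simpa [mgf, Finset.sum_apply] using h
  refine ⟨?_, key2⟩
  rw [key2]
  set p : Fin m → ℝ := fun i => (μ {ω | Z i ω = 1}).toReal with hp
  set a : Fin m → ℝ := fun i => Real.exp (lam * w i) - 1 with ha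
  -- single-variable integrals on the independent side
  have hsingle : ∀ i, ∫ ω, Real.exp (lam * (w i * Z₀ i ω)) ∂μ₂ = a i * p i + 1 := by
    intro i
    have hptw : ∀ ω, Real.exp (lam * (w i * Z₀ i ω))
        = a i * ({ω | Z₀ i ω = 1}).indicator (fun _ => (1:ℝ)) ω + 1 := by
      intro ω
      rcases hZ₀01 i ω with h0 | h1
      · rw [h0]
        have : ω ∉ {ω | Z₀ i ω = 1} := by simp [h0]
        rw [Set.indicator_of_notMem this]
        simp
      · rw [h1]
        have : ω ∈ {ω | Z₀ i ω = 1} := h1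
        rw [Set.indicator_of_mem this]
        simp [ha]
    have hms : MeasurableSet {ω | Z₀ i ω = 1} := (hZ₀meas i) (measurableSet_singleton 1)
    rw [integral_congr_ae (Filter.Eventually.of_forall hptw),
      integral_add (((integrable_const (1:ℝ)).indicator hms).const_mul _) (integrable_const 1),
      integral_const_mul, integral_indicator_const (1:ℝ) hms, smul_eq_mul, mul_one,
      integral_const, smul_eq_mul]
    simp [hsame i, hp, measureReal_def]
  have hrw : (∏ i, ∫ ω, Real.exp (lam * (w i * Z₀ i ω)) ∂μ₂) = ∏ i, (a i * p i + 1) :=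
    Finset.prod_congr rfl fun i _ => hsingle i
  rw [hrw]
  rcases le_or_gt 0 lam with hlam | hlam
  · -- λ ≥ 0 case
    have hptw : ∀ ω, Real.exp (lam * ∑ i, w i * Z i ω) = ∏ i, (a i * Z i ω + 1) := by
      intro ω
      rw [Finset.mul_sum, Real.exp_sum]
      refine Finset.prod_congr rfl fun i _ => ?_
      rcases hZ01 i ω with h0 | h1
      · rw [h0]; simp
      · rw [h1]; simp [ha]
    rw [integral_congr_ae (Filter.Eventually.of_forall hptw)]
    have := aux_prod_le μ Z hZmeas hZ01 (fun S => (hNCD S).1) a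
      (fun i => by simp [ha, Real.one_le_exp_iff.2, sub_nonneg,
        Real.one_le_exp (mul_nonneg hlam (hw i))])
    simpa [hp] using this
  · -- λ < 0 case
    set T : Fin m → Ω → ℝ := fun i ω => 1 - Z i ω with hT
    set b : Fin m → ℝ := fun i => Real.exp (-(lam * w i)) - 1 with hb
    set E : Fin m → ℝ := fun i => Real.exp (lam * w i) with hE
    have hTmeas : ∀ i, Measurable (T i) := fun i => measurable_const.sub (hZmeas i)
    have hT01 : ∀ i ω, T i ω = 0 ∨ T i ω = 1 := by
      intro i ω
      rcases hZ01 i ω with h0 | h1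
      · right; simp [hT, h0]
      · left; simp [hT, h1]
    have hTset : ∀ i, {ω | T i ω = 1} = {ω | Z i ω = 0} := by
      intro i; ext ω; simp [hT, sub_eq_self]
    have hbnd : ∀ S : Finset (Fin m),
        μ (⋂ i ∈ S, {ω | T i ω = 1}) ≤ ∏ i ∈ S, μ {ω | T i ω = 1} := by
      intro S
      simp only [hTset]
      exact (hNCD S).2
    have hbpos : ∀ i, 0 ≤ b i := by
      intro i
      simp only [hb, sub_nonneg]
      exact Real.one_le_exp (by nlinarith [hw i, hlam])
    have hptw : ∀ ω, Real.exp (lam * ∑ i, w i * Z i ω)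
        = (∏ i, E i) * ∏ i, (b i * T i ω + 1) := by
      intro ω
      rw [Finset.mul_sum, Real.exp_sum, ← Finset.prod_mul_distrib]
      refine Finset.prod_congr rfl fun i _ => ?_
      rcases hZ01 i ω with h0 | h1
      · rw [h0]
        have hTv : T i ω = 1 := by simp [hT, h0]
        rw [hTv]
        simp only [mul_zero, mul_one, Real.exp_zero, hb, hE]
        rw [sub_add_cancel, ← Real.exp_add]
        simp
      · rw [h1]
        have hTv : T i ω = 0 := by simp [hT, h1]
        rw [hTv]
        simp [hE]
    rw [integral_congr_ae (Filter.Eventually.of_forall hptw), integral_const_mul]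
    have hle := aux_prod_le μ T hTmeas hT01 hbnd b hbpos
    have hEpos : (0:ℝ) ≤ ∏ i, E i :=
      Finset.prod_nonneg fun i _ => (Real.exp_pos _).le
    calc (∏ i, E i) * ∫ ω, ∏ i, (b i * T i ω + 1) ∂μ
        ≤ (∏ i, E i) * ∏ i, (b i * (μ {ω | T i ω = 1}).toReal + 1) :=
          mul_le_mul_of_nonneg_left hle hEpos
      _ = ∏ i, (a i * p i + 1) := by
          rw [← Finset.prod_mul_distrib]
          refine Finset.prod_congr rfl fun i _ => ?_
          -- q = 1 - p
          have hZset : {ω | Z i ω = 0} = {ω | Z i ω = 1}ᶜ := by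
            ext ω
            simp only [Set.mem_setOf_eq, Set.mem_compl_iff]
            constructor
            · intro h0 h1; rw [h0] at h1; norm_num at h1
            · intro h1; rcases hZ01 i ω with h | h
              · exact h
              · exact absurd h h1
          have hq : (μ {ω | T i ω = 1}).toReal = 1 - p i := by
            have hc : μ ({ω | Z i ω = 1}ᶜ) = 1 - μ {ω | Z i ω = 1} :=
              prob_compl_eq_one_sub ((hZmeas i) (measurableSet_singleton 1))
            rw [hTset i, hZset, hc,
              ENNReal.toReal_sub_of_le prob_le_one ENNReal.one_ne_top]
            simp [hp]
          rw [hq]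
          have h1 : E i * Real.exp (-(lam * w i)) = 1 := by
            rw [hE, ← Real.exp_add]; simp
          simp only [hb, ha, hE] at h1 ⊢
          linear_combination (1 - p i) * h1
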